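/- Let (𝔤*,[·,·],a) be a pseudo-Riemannian Lie algebra with infinitesimal Levi-Civita connection A, i.e. [A_α β, γ] + [α, A_γ β] = 0 for all α,β,γ. Then on the semidirect product 𝔤* ⋉ 𝔤* with the complete form a^c and lifted connection B, the triple (𝔤* ⋉ 𝔤*, [·,·]_{𝔤*⋉𝔤*}, a^c) satisfies [B_{(α,β)}(α',β'), (α'',β'')]_{𝔤*⋉𝔤*} + [(α,β), B_{(α'',β'')}(α',β')]_{𝔤*⋉𝔤*} = 0 for all triples; i.e. it is also a pseudo-Riemannian Lie algebra. -/
import Mathlib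


/-- If `(𝔤*,[·,·],a)` is a pseudo-Riemannian Lie algebra, then
`(𝔤* ⋉ 𝔤*, [·,·]_{⋉}, a^c)` with the lifted connection `B` is also a
pseudo-Riemannian Lie algebra:
`[B_{(α,β)}(α',β'),(α'',β'')] + [(α,β), B_{(α'',β'')}(α',β')] = 0`. -/
theorem dual_semidirect_pseudo_riemannian
    (L : Type*) [LieRing L] [LieAlgebra ℝ L]
    (a : L →ₗ[ℝ] L →ₗ[ℝ] ℝ)
    (hsymm : ∀ x y, a x y = a y x)
    (hnd : ∀ x, (∀ y, a x y = 0) → x = 0)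
    (A : L →ₗ[ℝ] L →ₗ[ℝ] L)
    (hK : ∀ α β γ, 2 * a (A α β) γ = a ⁅α, β⁆ γ + a ⁅γ, α⁆ β + a ⁅γ, β⁆ α)
    (hpr : ∀ α β γ : L, ⁅A α β, γ⁆ + ⁅α, A γ β⁆ = 0) :
    let br : L × L → L × L → L × L :=
      fun p q => (⁅p.1, q.2⁆ + ⁅p.2, q.1⁆, ⁅p.2, q.2⁆)
    let B : L × L → L × L → L × L :=
      fun p q => (A p.1 q.2 + A p.2 q.1, A p.2 q.2)
    ∀ p q r : L × L, br (B p q) r + br p (B r q) = 0 := by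
  intro br B p q r
  have h1 := hpr p.1 q.2 r.2
  have h2 := hpr p.2 q.1 r.2
  have h3 := hpr p.2 q.2 r.1
  have h4 := hpr p.2 q.2 r.2
  have e1 : ⁅A p.1 q.2, r.2⁆ = -⁅p.1, A r.2 q.2⁆ := eq_neg_of_add_eq_zero_left h1
  have e2 : ⁅A p.2 q.1, r.2⁆ = -⁅p.2, A r.2 q.1⁆ := eq_neg_of_add_eq_zero_left h2
  have e3 : ⁅A p.2 q.2, r.1⁆ = -⁅p.2, A r.1 q.2⁆ := eq_neg_of_add_eq_zero_left h3
  have e4 : ⁅A p.2 q.2, r.2⁆ = -⁅p.2, A r.2 q.2⁆ := eq_neg_of_add_eq_zero_left h4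
  simp only [br, B, Prod.mk_add_mk, add_lie, lie_add, e1, e2, e3, e4, Prod.mk_eq_zero]
  constructor <;> abel
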